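/- Under complete randomization with zero-mean covariates z_i ∈ ℝ^K and D = (1/n)∑ z_i z_i' invertible, E[ z̄_A' D^{-1} ā*_A z̄_A ] = N_AAA · (1/n) ∑_{i=1}^n h_i a*_i, where h_i = z_i' D^{-1} z_i, a*_i = a_i − ā, ā*_A = (1/n_A)∑_{i∈A} a*_i, and N_AAA = (n/n_A³)( n_A/n − 3n_A(n_A−1)/(n(n−1)) + 2n_A(n_A−1)(n_A−2)/(n(n−1)(n−2)) ). -/

import Mathlib

open Finset Matrix

lemma aux_count {α : Type*} [Fintype α] [DecidableEq α] (m : ℕ) (S : Finset α) :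
    (((Finset.univ : Finset α).powersetCard m).filter (fun A => S ⊆ A)).card
      = if S.card ≤ m then (Fintype.card α - S.card).choose (m - S.card) else 0 := by
  split_ifs with hle
  · have hcard : Fintype.card α - S.card = (Finset.univ \ S).card := by
      rw [card_sdiff_of_subset (subset_univ _), card_univ]
    rw [hcard, ← Finset.card_powersetCard]
    refine Finset.card_nbij' (fun A => A \ S) (fun B => B ∪ S) ?_ ?_ ?_ ?_
    · intro A hA
      simp only [Finset.mem_coe, mem_filter, Finset.mem_powersetCard] at hA
      rw [Finset.mem_coe, Finset.mem_powersetCard]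
      exact ⟨sdiff_subset_sdiff hA.1.1 (le_refl _), by rw [card_sdiff_of_subset hA.2, hA.1.2]⟩
    · intro B hB
      rw [Finset.mem_coe, Finset.mem_powersetCard] at hB
      have hdisj : Disjoint B S := Finset.disjoint_of_subset_left hB.1 sdiff_disjoint
      simp only [Finset.mem_coe, mem_filter, Finset.mem_powersetCard]
      refine ⟨⟨subset_univ _, ?_⟩, Finset.subset_union_right⟩
      rw [Finset.card_union_of_disjoint hdisj, hB.2]
      omega
    · intro A hA
      simp only [Finset.mem_coe, mem_filter] at hA
      exact Finset.sdiff_union_of_subset hA.2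
    · intro B hB
      rw [Finset.mem_coe, Finset.mem_powersetCard] at hB
      exact Finset.union_sdiff_cancel_right (Finset.disjoint_of_subset_left hB.1 sdiff_disjoint)
  · rw [Finset.card_eq_zero, Finset.filter_eq_empty_iff]
    intro A hA hS
    rw [Finset.mem_powersetCard] at hA
    have := Finset.card_le_card hS
    omega

lemma aux_swap {α : Type*} [Fintype α] [DecidableEq α] (P : Finset (Finset α))
    (f : Finset α → α → ℝ) :
    ∑ A ∈ P, ∑ i ∈ A, f A i = ∑ i : α, ∑ A ∈ P.filter (fun A => i ∈ A), f A i := by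
  calc ∑ A ∈ P, ∑ i ∈ A, f A i
      = ∑ A ∈ P, ∑ i : α, if i ∈ A then f A i else 0 := by
        refine Finset.sum_congr rfl fun A _ => ?_
        rw [Finset.sum_ite_mem, Finset.univ_inter]
    _ = ∑ i : α, ∑ A ∈ P, if i ∈ A then f A i else 0 := Finset.sum_comm
    _ = _ := by
        refine Finset.sum_congr rfl fun i _ => (Finset.sum_filter _ _).symm

lemma nat1 (m l : ℕ) : (m+1) * m.choose l = (l+1) * (m+1).choose (l+1) := by
  rw [Nat.add_one_mul_choose_eq, Nat.mul_comm]

lemma dot_sum_sum {K n : ℕ} (f g : Fin n → Fin K → ℝ) (A B : Finset (Fin n)) :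
    (∑ i ∈ A, f i) ⬝ᵥ (∑ j ∈ B, g j) = ∑ i ∈ A, ∑ j ∈ B, f i ⬝ᵥ g j := by
  simp only [dotProduct, Finset.sum_apply, Finset.sum_mul, Finset.mul_sum]
  rw [Finset.sum_comm]
  exact Eq.trans (Finset.sum_congr rfl fun y _ => Finset.sum_comm) Finset.sum_comm

lemma aux_hcount (n nA : ℕ) (h1 : 1 ≤ nA)
    (P : Finset (Finset (Fin n))) (hP : P = Finset.powersetCard nA (Finset.univ : Finset (Fin n)))
    (C1 : ℝ) (hC1def : C1 = (((n-1).choose (nA-1) : ℕ) : ℝ))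
    (C2 : ℝ) (hC2def : C2 = if 2 ≤ nA then (((n-2).choose (nA-2) : ℕ) : ℝ) else 0)
    (C3 : ℝ) (hC3def : C3 = if 3 ≤ nA then (((n-3).choose (nA-3) : ℕ) : ℝ) else 0)
    (i j k : Fin n) :
      ((P.filter (fun A => i ∈ A ∧ j ∈ A ∧ k ∈ A)).card : ℝ)
        = C3 + (C2 - C3) * ((if i = j then (1:ℝ) else 0) + (if j = k then (1:ℝ) else 0)
            + (if i = k then (1:ℝ) else 0))
          + (C1 - 3*C2 + 2*C3) * ((if i = j then (1:ℝ) else 0) * (if j = k then (1:ℝ) else 0)) := by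
  classical
  have hcond : P.filter (fun A => i ∈ A ∧ j ∈ A ∧ k ∈ A)
      = P.filter (fun A => ({i,j,k} : Finset (Fin n)) ⊆ A) := by
    apply Finset.filter_congr
    intro A _
    simp [Finset.insert_subset_iff]
  rw [hcond, hP, aux_count, Fintype.card_fin]
  have h1eq : ((if 1 ≤ nA then (n-1).choose (nA-1) else 0 : ℕ) : ℝ) = C1 := by
    rw [if_pos h1, hC1def]
  have h2eq : ((if 2 ≤ nA then (n-2).choose (nA-2) else 0 : ℕ) : ℝ) = C2 := by
    rw [apply_ite (Nat.cast : ℕ → ℝ), Nat.cast_zero, hC2def]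
  have h3eq : ((if 3 ≤ nA then (n-3).choose (nA-3) else 0 : ℕ) : ℝ) = C3 := by
    rw [apply_ite (Nat.cast : ℕ → ℝ), Nat.cast_zero, hC3def]
  by_cases hij : i = j <;> by_cases hjk : j = k <;> by_cases hik : i = k
  · subst hij; subst hjk
    have hc : ({i,i,i} : Finset (Fin n)).card = 1 := by simp
    rw [hc, h1eq]
    simp only [if_pos rfl, if_true]
    norm_num
    ring
  · exact absurd (hij.trans hjk) hik
  · exact absurd (hij.symm.trans hik) hjk
  · subst hij
    have hc : ({i,i,k} : Finset (Fin n)).card = 2 := by simp [hjk]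
    rw [hc, h2eq]
    simp only [if_pos rfl, if_neg hjk, if_neg hik]
    norm_num
  · exact absurd (hik.trans hjk.symm) hij
  · subst hjk
    have hc : ({i,j,j} : Finset (Fin n)).card = 2 := by simp [hij]
    rw [hc, h2eq]
    simp only [if_neg hij, if_pos rfl]
    norm_num
  · have hpair : ({i,j,k} : Finset (Fin n)) = {j, i} := by
      ext x
      simp only [Finset.mem_insert, Finset.mem_singleton, ← hik]
      tauto
    have hc : ({i,j,k} : Finset (Fin n)).card = 2 := by
      rw [hpair, Finset.card_pair (fun e => hij e.symm)]
    rw [hc, h2eq]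
    simp only [if_neg hij, if_neg hjk, if_pos hik]
    ring
  · have hc : ({i,j,k} : Finset (Fin n)).card = 3 := by
      rw [Finset.card_insert_of_notMem (by simp [hij, hik]),
        Finset.card_insert_of_notMem (by simp [hjk]), Finset.card_singleton]
    rw [hc, h3eq]
    simp only [if_neg hij, if_neg hjk, if_neg hik]
    ring

lemma aux_hbig (n : ℕ) (P : Finset (Finset (Fin n))) (q : Fin n → Fin n → ℝ) (w : Fin n → ℝ) :
    ∑ A ∈ P, ∑ i ∈ A, ∑ j ∈ A, ∑ k ∈ A, q i j * w k
      = ∑ i, ∑ j, ∑ k, ((P.filter (fun A => i ∈ A ∧ j ∈ A ∧ k ∈ A)).card : ℝ)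
          * (q i j * w k) := by
  classical
  rw [aux_swap P (fun A i => ∑ j ∈ A, ∑ k ∈ A, q i j * w k)]
  refine Finset.sum_congr rfl fun i _ => ?_
  rw [aux_swap _ (fun A j => ∑ k ∈ A, q i j * w k)]
  refine Finset.sum_congr rfl fun j _ => ?_
  rw [aux_swap _ (fun A k => q i j * w k)]
  refine Finset.sum_congr rfl fun k _ => ?_
  rw [Finset.sum_const, Finset.filter_filter, Finset.filter_filter, nsmul_eq_mul]

lemma aux_hfive (n : ℕ) (q : Fin n → Fin n → ℝ) (w : Fin n → ℝ) (C1 C2 C3 T : ℝ)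
    (hw : ∑ i, w i = 0)
    (hqrow : ∀ i, ∑ j, q i j = 0)
    (hqcol : ∀ j, ∑ i, q i j = 0)
    (hT : T = ∑ i, q i i * w i) :
    ∑ i, ∑ j, ∑ k,
      (C3 + (C2 - C3) * ((if i = j then (1:ℝ) else 0) + (if j = k then (1:ℝ) else 0)
            + (if i = k then (1:ℝ) else 0))
          + (C1 - 3*C2 + 2*C3) * ((if i = j then (1:ℝ) else 0) * (if j = k then (1:ℝ) else 0)))
        * (q i j * w k)
      = (C1 - 3*C2 + 2*C3) * T := by
  have expand : ∀ i j k : Fin n,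
      (C3 + (C2 - C3) * ((if i = j then (1:ℝ) else 0) + (if j = k then (1:ℝ) else 0)
            + (if i = k then (1:ℝ) else 0))
          + (C1 - 3*C2 + 2*C3) * ((if i = j then (1:ℝ) else 0) * (if j = k then (1:ℝ) else 0)))
        * (q i j * w k)
      = C3 * (q i j * w k)
        + (C2 - C3) * ((if i = j then (1:ℝ) else 0) * (q i j * w k))
        + (C2 - C3) * ((if j = k then (1:ℝ) else 0) * (q i j * w k))
        + (C2 - C3) * ((if i = k then (1:ℝ) else 0) * (q i j * w k))
        + (C1 - 3*C2 + 2*C3) * ((if i = j then (1:ℝ) else 0) * (if j = k then (1:ℝ) else 0)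
            * (q i j * w k)) := fun i j k => by ring
  simp only [expand, Finset.sum_add_distrib]
  have S0 : ∑ i : Fin n, ∑ j : Fin n, ∑ k : Fin n, C3 * (q i j * w k) = 0 := by
    simp [← Finset.mul_sum, hw]
  have S1 : ∑ i : Fin n, ∑ j : Fin n, ∑ k : Fin n,
      (C2 - C3) * ((if i = j then (1:ℝ) else 0) * (q i j * w k)) = 0 := by
    simp [mul_ite, ite_mul, mul_zero, zero_mul, Finset.sum_ite_eq, ← Finset.mul_sum, hw]
  have S2 : ∑ i : Fin n, ∑ j : Fin n, ∑ k : Fin n,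
      (C2 - C3) * ((if j = k then (1:ℝ) else 0) * (q i j * w k)) = 0 := by
    simp only [mul_ite, ite_mul, mul_zero, zero_mul, one_mul, Finset.sum_ite_eq,
      Finset.mem_univ, if_true]
    rw [Finset.sum_comm]
    simp only [← Finset.sum_mul, ← Finset.mul_sum]
    simp [← Finset.sum_mul, hqcol]
  have S3 : ∑ i : Fin n, ∑ j : Fin n, ∑ k : Fin n,
      (C2 - C3) * ((if i = k then (1:ℝ) else 0) * (q i j * w k)) = 0 := by
    simp only [mul_ite, ite_mul, mul_zero, zero_mul, one_mul, Finset.sum_ite_eq,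
      Finset.mem_univ, if_true]
    simp [← Finset.sum_mul, ← Finset.mul_sum, hqrow]
  have S4 : ∑ i : Fin n, ∑ j : Fin n, ∑ k : Fin n,
      (C1 - 3*C2 + 2*C3) * ((if i = j then (1:ℝ) else 0) * (if j = k then (1:ℝ) else 0)
        * (q i j * w k)) = (C1 - 3*C2 + 2*C3) * T := by
    simp only [mul_ite, ite_mul, mul_zero, zero_mul, one_mul, Finset.sum_ite_eq,
      Finset.mem_univ, if_true, ← Finset.mul_sum]
    rw [hT]
  rw [S0, S1, S2, S3, S4]
  ring

lemma aux_choose (n nA : ℕ) (hn : 3 ≤ n) (h1 : 1 ≤ nA) (h2 : nA ≤ n)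
    (C1 C2 C3 : ℝ)
    (hC1def : C1 = (((n-1).choose (nA-1) : ℕ) : ℝ))
    (hC2def : C2 = if 2 ≤ nA then (((n-2).choose (nA-2) : ℕ) : ℝ) else 0)
    (hC3def : C3 = if 3 ≤ nA then (((n-3).choose (nA-3) : ℕ) : ℝ) else 0) :
    ((n:ℝ) * C1 = (nA:ℝ) * ((n.choose nA : ℕ) : ℝ))
    ∧ ((n:ℝ) * ((n:ℝ) - 1) * C2 = (nA:ℝ) * ((nA:ℝ) - 1) * ((n.choose nA : ℕ) : ℝ))
    ∧ ((n:ℝ) * ((n:ℝ) - 1) * ((n:ℝ) - 2) * C3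
        = (nA:ℝ) * ((nA:ℝ) - 1) * ((nA:ℝ) - 2) * ((n.choose nA : ℕ) : ℝ)) := by
  have natE1 : n * (n-1).choose (nA-1) = nA * n.choose nA := by
    have := nat1 (n-1) (nA-1)
    rwa [show n-1+1 = n by omega, show nA-1+1 = nA by omega] at this
  have e1 : (n:ℝ) * C1 = (nA:ℝ) * ((n.choose nA : ℕ) : ℝ) := by
    rw [hC1def]
    exact_mod_cast natE1
  refine ⟨e1, ?_, ?_⟩
  · by_cases h2A : 2 ≤ nA
    · have a1 : (n-1) * (n-2).choose (nA-2) = (nA-1) * (n-1).choose (nA-1) := by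
        have := nat1 (n-2) (nA-2)
        rwa [show n-2+1 = n-1 by omega, show nA-2+1 = nA-1 by omega] at this
      have natE2 : n * (n-1) * (n-2).choose (nA-2) = nA * (nA-1) * n.choose nA := by
        calc n * (n-1) * (n-2).choose (nA-2) = n * ((n-1) * (n-2).choose (nA-2)) := by ring
          _ = n * ((nA-1) * (n-1).choose (nA-1)) := by rw [a1]
          _ = (nA-1) * (n * (n-1).choose (nA-1)) := by ring
          _ = (nA-1) * (nA * n.choose nA) := by rw [natE1]
          _ = nA * (nA-1) * n.choose nA := by ring
      have hcast := congrArg (Nat.cast : ℕ → ℝ) natE2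
      push_cast [Nat.cast_sub (show 1 ≤ n by omega), Nat.cast_sub (show 1 ≤ nA by omega)] at hcast
      rw [hC2def, if_pos h2A]
      linear_combination hcast
    · have hnA1 : nA = 1 := by omega
      subst hnA1
      rw [hC2def]
      norm_num
  · by_cases h3A : 3 ≤ nA
    · have a1 : (n-1) * (n-2).choose (nA-2) = (nA-1) * (n-1).choose (nA-1) := by
        have := nat1 (n-2) (nA-2)
        rwa [show n-2+1 = n-1 by omega, show nA-2+1 = nA-1 by omega] at this
      have a2 : (n-2) * (n-3).choose (nA-3) = (nA-2) * (n-2).choose (nA-2) := by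
        have := nat1 (n-3) (nA-3)
        rwa [show n-3+1 = n-2 by omega, show nA-3+1 = nA-2 by omega] at this
      have natE3 : n * (n-1) * (n-2) * (n-3).choose (nA-3)
          = nA * (nA-1) * (nA-2) * n.choose nA := by
        calc n * (n-1) * (n-2) * (n-3).choose (nA-3)
            = n * (n-1) * ((n-2) * (n-3).choose (nA-3)) := by ring
          _ = n * (n-1) * ((nA-2) * (n-2).choose (nA-2)) := by rw [a2]
          _ = (nA-2) * (n * ((n-1) * (n-2).choose (nA-2))) := by ring
          _ = (nA-2) * (n * ((nA-1) * (n-1).choose (nA-1))) := by rw [a1]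
          _ = (nA-2) * ((nA-1) * (n * (n-1).choose (nA-1))) := by ring
          _ = (nA-2) * ((nA-1) * (nA * n.choose nA)) := by rw [natE1]
          _ = nA * (nA-1) * (nA-2) * n.choose nA := by ring
      have hcast := congrArg (Nat.cast : ℕ → ℝ) natE3
      push_cast [Nat.cast_sub (show 1 ≤ n by omega), Nat.cast_sub (show 1 ≤ nA by omega),
        Nat.cast_sub (show 2 ≤ n by omega), Nat.cast_sub (show 2 ≤ nA by omega)] at hcast
      rw [hC3def, if_pos h3A]
      linear_combination hcast
    · rw [hC3def, if_neg h3A]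
      have : nA = 1 ∨ nA = 2 := by omega
      rcases this with hcase | hcase <;> subst hcase <;> norm_num

/-- `E[ z̄_A' D⁻¹ ā*_A z̄_A ] = N_AAA (1/n) ∑ h_i a*_i` with `h_i = z_i' D⁻¹ z_i`. -/
theorem stmt19 (n K nA : ℕ) (hn : 3 ≤ n) (h1 : 1 ≤ nA) (h2 : nA ≤ n)
    (z : Fin n → Fin K → ℝ) (hz : ∑ i, z i = 0)
    (a : Fin n → ℝ)
    (D : Matrix (Fin K) (Fin K) ℝ)
    (hD : D = (n : ℝ)⁻¹ • ∑ i, vecMulVec (z i) (z i))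
    (hDinv : IsUnit D.det)
    (h : Fin n → ℝ) (hh : ∀ i, h i = z i ⬝ᵥ (D⁻¹ *ᵥ z i))
    (abar : ℝ) (habar : abar = (n : ℝ)⁻¹ * ∑ i, a i) :
    (∑ A ∈ Finset.powersetCard nA (Finset.univ : Finset (Fin n)),
        ((nA : ℝ)⁻¹ • ∑ i ∈ A, z i) ⬝ᵥ
          (D⁻¹ *ᵥ (((nA : ℝ)⁻¹ * ∑ i ∈ A, (a i - abar)) •
                    ((nA : ℝ)⁻¹ • ∑ i ∈ A, z i)))) /
      ((Finset.powersetCard nA (Finset.univ : Finset (Fin n))).card : ℝ)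
    = ((n : ℝ) / (nA : ℝ) ^ 3) *
        ((nA : ℝ) / n - 3 * nA * ((nA : ℝ) - 1) / ((n : ℝ) * ((n : ℝ) - 1))
          + 2 * nA * ((nA : ℝ) - 1) * ((nA : ℝ) - 2) /
              ((n : ℝ) * ((n : ℝ) - 1) * ((n : ℝ) - 2))) *
        ((n : ℝ)⁻¹ * ∑ i, h i * (a i - abar)) := by
  classical
  have hn0 : (0:ℝ) < (n:ℝ) := by exact_mod_cast (by omega : 0 < n)
  have hnne : (n:ℝ) ≠ 0 := ne_of_gt hn0
  have hnAne : (nA:ℝ) ≠ 0 := by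
    have : (0:ℝ) < (nA:ℝ) := by exact_mod_cast (by omega : 0 < nA)
    exact ne_of_gt this
  -- zero-sum facts
  have hw : ∑ i, (a i - abar) = 0 := by
    rw [Finset.sum_sub_distrib, Finset.sum_const, Finset.card_univ, Fintype.card_fin, habar,
      nsmul_eq_mul]
    field_simp
    ring
  have hzsum : ∀ s, ∑ i, z i s = 0 := fun s => by
    simpa [Finset.sum_apply] using congrFun hz s
  have hmv : ∑ j, (D⁻¹ *ᵥ z j) = 0 := by
    have h' := map_sum (Matrix.mulVecLin D⁻¹) z Finset.univ
    rw [hz] at h'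
    simpa using h'.symm
  have hqrow : ∀ i, ∑ j, z i ⬝ᵥ (D⁻¹ *ᵥ z j) = 0 := by
    intro i
    have hptw : ∀ s, ∑ j, (D⁻¹ *ᵥ z j) s = 0 := fun s => by
      simpa [Finset.sum_apply] using congrFun hmv s
    simp only [dotProduct]
    rw [Finset.sum_comm]
    simp [← Finset.mul_sum, hptw]
  have hqcol : ∀ j, ∑ i, z i ⬝ᵥ (D⁻¹ *ᵥ z j) = 0 := by
    intro j
    simp only [dotProduct]
    rw [Finset.sum_comm]
    simp [← Finset.sum_mul, hzsum]
  -- abbreviations (as plain definitions)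
  set P : Finset (Finset (Fin n)) := Finset.powersetCard nA (Finset.univ : Finset (Fin n)) with hP
  set C1 : ℝ := (((n-1).choose (nA-1) : ℕ) : ℝ) with hC1def
  set C2 : ℝ := if 2 ≤ nA then (((n-2).choose (nA-2) : ℕ) : ℝ) else 0 with hC2def
  set C3 : ℝ := if 3 ≤ nA then (((n-3).choose (nA-3) : ℕ) : ℝ) else 0 with hC3def
  set T : ℝ := ∑ i, (z i ⬝ᵥ (D⁻¹ *ᵥ z i)) * (a i - abar) with hT
  -- per-A term
  have hterm : ∀ A : Finset (Fin n),
      ((nA : ℝ)⁻¹ • ∑ i ∈ A, z i) ⬝ᵥ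
          (D⁻¹ *ᵥ (((nA : ℝ)⁻¹ * ∑ i ∈ A, (a i - abar)) •
                    ((nA : ℝ)⁻¹ • ∑ i ∈ A, z i)))
        = (nA:ℝ)⁻¹^3 * ∑ i ∈ A, ∑ j ∈ A, ∑ k ∈ A, (z i ⬝ᵥ (D⁻¹ *ᵥ z j)) * (a k - abar) := by
    intro A
    have hb1 : D⁻¹ *ᵥ (∑ j ∈ A, z j) = ∑ j ∈ A, D⁻¹ *ᵥ z j :=
      map_sum (Matrix.mulVecLin D⁻¹) z A
    rw [Matrix.mulVec_smul, Matrix.mulVec_smul, dotProduct_smul, dotProduct_smul,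
      smul_dotProduct, hb1]
    have hb2 : (∑ i ∈ A, z i) ⬝ᵥ (∑ j ∈ A, D⁻¹ *ᵥ z j)
        = ∑ i ∈ A, ∑ j ∈ A, z i ⬝ᵥ (D⁻¹ *ᵥ z j) := dot_sum_sum z (fun j => D⁻¹ *ᵥ z j) A A
    rw [hb2]
    simp only [smul_eq_mul]
    rw [show ∑ i ∈ A, ∑ j ∈ A, ∑ k ∈ A, (z i ⬝ᵥ (D⁻¹ *ᵥ z j)) * (a k - abar)
        = (∑ i ∈ A, ∑ j ∈ A, z i ⬝ᵥ (D⁻¹ *ᵥ z j)) * (∑ k ∈ A, (a k - abar)) by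
      simp only [← Finset.mul_sum, ← Finset.sum_mul]]
    ring
  have hbig : ∑ A ∈ P, ∑ i ∈ A, ∑ j ∈ A, ∑ k ∈ A, (z i ⬝ᵥ (D⁻¹ *ᵥ z j)) * (a k - abar)
      = ∑ i, ∑ j, ∑ k, ((P.filter (fun A => i ∈ A ∧ j ∈ A ∧ k ∈ A)).card : ℝ)
          * ((z i ⬝ᵥ (D⁻¹ *ᵥ z j)) * (a k - abar)) :=
    aux_hbig n P (fun i j => z i ⬝ᵥ (D⁻¹ *ᵥ z j)) (fun k => a k - abar)
  have hcount := aux_hcount n nA h1 P hP C1 hC1def C2 hC2def C3 hC3def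
  have hfive : ∑ i, ∑ j, ∑ k,
      (C3 + (C2 - C3) * ((if i = j then (1:ℝ) else 0) + (if j = k then (1:ℝ) else 0)
            + (if i = k then (1:ℝ) else 0))
          + (C1 - 3*C2 + 2*C3) * ((if i = j then (1:ℝ) else 0) * (if j = k then (1:ℝ) else 0)))
        * ((z i ⬝ᵥ (D⁻¹ *ᵥ z j)) * (a k - abar))
      = (C1 - 3*C2 + 2*C3) * T :=
    aux_hfive n (fun i j => z i ⬝ᵥ (D⁻¹ *ᵥ z j)) (fun k => a k - abar) C1 C2 C3 T
      hw hqrow hqcol hT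
  have hPcard : ((P.card : ℕ) : ℝ) = ((n.choose nA : ℕ) : ℝ) := by
    rw [hP, Finset.card_powersetCard, Finset.card_univ, Fintype.card_fin]
  have hCn0 : ((n.choose nA : ℕ) : ℝ) ≠ 0 := by
    have := Nat.choose_pos h2
    positivity
  obtain ⟨e1r, e2r, e3r⟩ := aux_choose n nA hn h1 h2 C1 C2 C3 hC1def hC2def hC3def
  have hTfin : ∑ i, h i * (a i - abar) = T := by
    rw [hT]
    exact Finset.sum_congr rfl fun i _ => by rw [hh i]
  rw [Finset.sum_congr rfl fun A _ => hterm A, ← Finset.mul_sum, hbig,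
    Finset.sum_congr rfl fun i _ => Finset.sum_congr rfl fun j _ => Finset.sum_congr rfl
      fun k _ => by rw [hcount i j k],
    hfive, hPcard, hTfin]
  have hn1ne : (n:ℝ) - 1 ≠ 0 := by
    have : (3:ℝ) ≤ (n:ℝ) := by exact_mod_cast hn
    linarith
  have hn2ne : (n:ℝ) - 2 ≠ 0 := by
    have : (3:ℝ) ≤ (n:ℝ) := by exact_mod_cast hn
    linarith
  have hC1v : C1 = (nA:ℝ) * ((n.choose nA : ℕ) : ℝ) / (n:ℝ) := by
    rw [eq_div_iff hnne]; linear_combination e1r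
  have hC2v : C2 = (nA:ℝ) * ((nA:ℝ) - 1) * ((n.choose nA : ℕ) : ℝ) / ((n:ℝ) * ((n:ℝ) - 1)) := by
    rw [eq_div_iff (mul_ne_zero hnne hn1ne)]; linear_combination e2r
  have hC3v : C3 = (nA:ℝ) * ((nA:ℝ) - 1) * ((nA:ℝ) - 2) * ((n.choose nA : ℕ) : ℝ)
      / ((n:ℝ) * ((n:ℝ) - 1) * ((n:ℝ) - 2)) := by
    rw [eq_div_iff (mul_ne_zero (mul_ne_zero hnne hn1ne) hn2ne)]; linear_combination e3r
  rw [hC1v, hC2v, hC3v]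
  field_simp
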